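/- Let X be a Banach space and K, L ⊆ X* nonempty, w*-compact, and convex. Then Sz(K + L) = max{Sz(K), Sz(L)}. -/

import Mathlib

open NormedSpace

noncomputable def derivIter {α : Type*} (d : Set α → Set α) (K : Set α) : Ordinal → Set α :=
  fun ξ => Ordinal.limitRecOn ξ K (fun _ ih => d ih)
    (fun o _ ih => ⋂ ζ : Set.Iio o, ih ζ.1 ζ.2)

/-- The Szlenk slicing derivation: `s_ε(K)` removes from `K` every point contained in
a `w*`-open set whose intersection with `K` has norm diameter at most `ε`. -/
def szSlice {X : Type*} [NormedAddCommGroup X] [NormedSpace ℝ X] (ε : ℝ)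
    (K : Set (StrongDual ℝ X)) : Set (StrongDual ℝ X) :=
  {f ∈ K | ∀ W : Set (WeakDual ℝ X), IsOpen W → StrongDual.toWeakDual f ∈ W →
    ε < Metric.diam (K ∩ (fun g => StrongDual.toWeakDual g) ⁻¹' W)}

open scoped Pointwise

section Abstract

/-! ### Abstract diameter -/

variable {β : Type*} {β' : Type*}

/-- Abstract diameter of a set with respect to a distance-like function. -/
noncomputable def ddiam (d : β → β → ℝ) (S : Set β) : ℝ :=
  sSup ({0} ∪ Set.image2 d S S)

/-- Boundedness of `d` on a set. -/
def DBdd (d : β → β → ℝ) (S : Set β) : Prop :=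
  ∃ M, ∀ x ∈ S, ∀ y ∈ S, d x y ≤ M

theorem DBdd.mono {d : β → β → ℝ} {S T : Set β} (h : DBdd d T) (hST : S ⊆ T) : DBdd d S := by
  obtain ⟨M, hM⟩ := h
  exact ⟨M, fun x hx y hy => hM x (hST hx) y (hST hy)⟩

theorem DBdd.bddAbove {d : β → β → ℝ} {S : Set β} (h : DBdd d S) :
    BddAbove ({0} ∪ Set.image2 d S S) := by
  obtain ⟨M, hM⟩ := h
  refine ⟨max M 0, ?_⟩
  rintro z (rfl | hz)
  · exact le_max_right _ _
  · obtain ⟨x, hx, y, hy, rfl⟩ := hz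
    exact le_max_of_le_left (hM x hx y hy)

theorem ddiam_nonneg (d : β → β → ℝ) (S : Set β) : 0 ≤ ddiam d S := by
  by_cases h : BddAbove ({0} ∪ Set.image2 d S S)
  · exact le_csSup h (Or.inl rfl)
  · rw [ddiam, Real.sSup_of_not_bddAbove h]

theorem le_ddiam {d : β → β → ℝ} {S : Set β} {x y : β} (h : DBdd d S)
    (hx : x ∈ S) (hy : y ∈ S) : d x y ≤ ddiam d S :=
  le_csSup h.bddAbove (Or.inr ⟨x, hx, y, hy, rfl⟩)

theorem ddiam_le {d : β → β → ℝ} {S : Set β} {c : ℝ} (h0 : 0 ≤ c)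
    (h : ∀ x ∈ S, ∀ y ∈ S, d x y ≤ c) : ddiam d S ≤ c := by
  refine csSup_le ⟨0, Or.inl rfl⟩ ?_
  rintro z (rfl | hz)
  · exact h0
  · obtain ⟨x, hx, y, hy, rfl⟩ := hz
    exact h x hx y hy

theorem ddiam_mono {d : β → β → ℝ} {S T : Set β} (hST : S ⊆ T) (h : DBdd d T) :
    ddiam d S ≤ ddiam d T := by
  refine csSup_le_csSup h.bddAbove ⟨0, Or.inl rfl⟩ ?_
  rintro z (rfl | hz)
  · exact Or.inl rfl
  · obtain ⟨x, hx, y, hy, rfl⟩ := hz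
    exact Or.inr ⟨x, hST hx, y, hST hy, rfl⟩

theorem exists_lt_of_lt_ddiam {d : β → β → ℝ} {S : Set β} {ε : ℝ} (h0 : 0 ≤ ε)
    (h : ε < ddiam d S) : ∃ x ∈ S, ∃ y ∈ S, ε < d x y := by
  by_contra hc
  push_neg at hc
  exact absurd (ddiam_le h0 hc) (not_le.2 h)

/-- Abstract diameter equals metric diameter for a pseudometric. -/
theorem diam_eq_ddiam {γ : Type*} [PseudoMetricSpace γ] (S : Set γ) :
    Metric.diam S = ddiam dist S := by
  by_cases hbd : Bornology.IsBounded S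
  · have hD : DBdd dist S := by
      obtain ⟨C, hC⟩ := Metric.isBounded_iff.1 hbd
      exact ⟨C, fun x hx y hy => hC hx hy⟩
    refine le_antisymm ?_ ?_
    · exact Metric.diam_le_of_forall_dist_le (ddiam_nonneg _ _)
        (fun x hx y hy => le_ddiam hD hx hy)
    · exact ddiam_le Metric.diam_nonneg
        (fun x hx y hy => Metric.dist_le_diam_of_mem hbd hx hy)
  · rw [Metric.diam_eq_zero_of_unbounded hbd]
    have : ¬ BddAbove ({0} ∪ Set.image2 dist S S) := by
      intro ⟨M, hM⟩
      refine hbd (Metric.isBounded_iff.2 ⟨M, fun x hx y hy => ?_⟩)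
      exact hM (Or.inr ⟨x, hx, y, hy, rfl⟩)
    rw [ddiam, Real.sSup_of_not_bddAbove this]

/-! ### Abstract derivation -/

variable [TopologicalSpace β] [TopologicalSpace β']

/-- The abstract Szlenk-type derivation. -/
def dder (d : β → β → ℝ) (ε : ℝ) (C : Set β) : Set β :=
  {x ∈ C | ∀ W : Set β, IsOpen W → x ∈ W → ε < ddiam d (C ∩ W)}

theorem dder_subset (d : β → β → ℝ) (ε : ℝ) (C : Set β) : dder d ε C ⊆ C :=
  fun _ hx => hx.1

theorem dder_mono {d : β → β → ℝ} {ε : ℝ} {C C' : Set β} (h : C ⊆ C')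
    (hb : DBdd d C') : dder d ε C ⊆ dder d ε C' := by
  rintro x ⟨hxC, hx⟩
  refine ⟨h hxC, fun W hW hxW => lt_of_lt_of_le (hx W hW hxW) ?_⟩
  exact ddiam_mono (Set.inter_subset_inter_left W h) (hb.mono Set.inter_subset_left)

theorem dder_anti {d : β → β → ℝ} {ε ε' : ℝ} (h : ε ≤ ε') (C : Set β) :
    dder d ε' C ⊆ dder d ε C := by
  rintro x ⟨hxC, hx⟩
  exact ⟨hxC, fun W hW hxW => lt_of_le_of_lt h (hx W hW hxW)⟩

theorem dder_isClosed {d : β → β → ℝ} {ε : ℝ} {C : Set β} (h : IsClosed C) :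
    IsClosed (dder d ε C) := by
  have : dder d ε C = C ∩ (⋃₀ {W | IsOpen W ∧ ddiam d (C ∩ W) ≤ ε})ᶜ := by
    ext x
    simp only [dder, Set.mem_setOf_eq, Set.mem_inter_iff, Set.mem_compl_iff, Set.mem_sUnion]
    constructor
    · rintro ⟨hxC, hx⟩
      refine ⟨hxC, ?_⟩
      rintro ⟨W, ⟨hW, hWd⟩, hxW⟩
      exact absurd (hx W hW hxW) (not_lt.2 hWd)
    · rintro ⟨hxC, hx⟩
      refine ⟨hxC, fun W hW hxW => ?_⟩
      by_contra hc
      exact hx ⟨W, ⟨hW, not_lt.1 hc⟩, hxW⟩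
  rw [this]
  exact h.inter (isOpen_sUnion (fun W hW => hW.1)).isClosed_compl

/-! ### Iterated derivations -/

theorem derivIter_zero {α : Type*} (d : Set α → Set α) (K : Set α) :
    derivIter d K 0 = K :=
  Ordinal.limitRecOn_zero _ _ _

theorem derivIter_succ {α : Type*} (d : Set α → Set α) (K : Set α) (o : Ordinal) :
    derivIter d K (Order.succ o) = d (derivIter d K o) :=
  Ordinal.limitRecOn_succ _ _ _ _

theorem derivIter_add_one {α : Type*} (d : Set α → Set α) (K : Set α) (o : Ordinal) :
    derivIter d K (o + 1) = d (derivIter d K o) := by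
  rw [Ordinal.add_one_eq_succ, derivIter_succ]

theorem derivIter_limit {α : Type*} (d : Set α → Set α) (K : Set α) {o : Ordinal}
    (ho : Order.IsSuccLimit o) : derivIter d K o = ⋂ ζ : Set.Iio o, derivIter d K ζ.1 :=
  Ordinal.limitRecOn_limit _ _ _ _ ho

theorem derivIter_subset {α : Type*} {d : Set α → Set α} (hd : ∀ C, d C ⊆ C) (K : Set α) :
    ∀ ξ, derivIter d K ξ ⊆ K := by
  intro ξ
  induction ξ using Ordinal.limitRecOn with
  | zero => rw [derivIter_zero]
  | add_one o IH => rw [derivIter_add_one]; exact (hd _).trans IH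
  | limit o ho IH =>
      rw [derivIter_limit _ _ ho]
      exact (Set.iInter_subset _ (⟨0, ho.pos⟩ : Set.Iio o)).trans (IH 0 ho.pos)

theorem derivIter_anti {α : Type*} {d : Set α → Set α} (hd : ∀ C, d C ⊆ C) (K : Set α) :
    ∀ ξ ζ, ζ ≤ ξ → derivIter d K ξ ⊆ derivIter d K ζ := by
  intro ξ
  induction ξ using Ordinal.limitRecOn with
  | zero => intro ζ hζ; rw [nonpos_iff_eq_zero.1 hζ]
  | add_one o IH =>
      intro ζ hζ
      rcases eq_or_lt_of_le hζ with rfl | hlt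
      · exact subset_rfl
      · rw [derivIter_add_one]
        exact ((hd _).trans (IH ζ (Order.lt_add_one_iff.1 hlt)))
  | limit o ho IH =>
      intro ζ hζ
      rcases eq_or_lt_of_le hζ with rfl | hlt
      · exact subset_rfl
      · rw [derivIter_limit _ _ ho]
        exact Set.iInter_subset (fun ζ' : Set.Iio o => derivIter d K ζ'.1) ⟨ζ, hlt⟩

theorem derivIter_dder_mono {d : β → β → ℝ} {ε : ℝ} {K K' : Set β} (h : K ⊆ K')
    (hb : DBdd d K') : ∀ ξ, derivIter (dder d ε) K ξ ⊆ derivIter (dder d ε) K' ξ := by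
  intro ξ
  induction ξ using Ordinal.limitRecOn with
  | zero => rw [derivIter_zero, derivIter_zero]; exact h
  | add_one o IH =>
      rw [derivIter_add_one, derivIter_add_one]
      exact dder_mono IH (hb.mono (derivIter_subset (dder_subset d ε) K' o))
  | limit o ho IH =>
      rw [derivIter_limit _ _ ho, derivIter_limit _ _ ho]
      exact Set.iInter_mono (fun ζ => IH ζ.1 ζ.2)

theorem derivIter_dder_anti_eps {d : β → β → ℝ} {ε ε' : ℝ} (hee : ε ≤ ε') {K : Set β}
    (hb : DBdd d K) : ∀ ξ, derivIter (dder d ε') K ξ ⊆ derivIter (dder d ε) K ξ := by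
  intro ξ
  induction ξ using Ordinal.limitRecOn with
  | zero => rw [derivIter_zero, derivIter_zero]
  | add_one o IH =>
      rw [derivIter_add_one, derivIter_add_one]
      exact (dder_mono IH (hb.mono (derivIter_subset (dder_subset d ε) K o))).trans
        (dder_anti hee _)
  | limit o ho IH =>
      rw [derivIter_limit _ _ ho, derivIter_limit _ _ ho]
      exact Set.iInter_mono (fun ζ => IH ζ.1 ζ.2)

theorem derivIter_dder_isClosed {d : β → β → ℝ} {ε : ℝ} {K : Set β} (hK : IsClosed K) :
    ∀ ξ, IsClosed (derivIter (dder d ε) K ξ) := by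
  intro ξ
  induction ξ using Ordinal.limitRecOn with
  | zero => rw [derivIter_zero]; exact hK
  | add_one o IH => rw [derivIter_add_one]; exact dder_isClosed IH
  | limit o ho IH =>
      rw [derivIter_limit _ _ ho]
      exact isClosed_iInter (fun ζ => IH ζ.1 ζ.2)

theorem derivIter_dder_isCompact {d : β → β → ℝ} {ε : ℝ} {K : Set β} (hKc : IsCompact K)
    (hKcl : IsClosed K) (ξ : Ordinal) : IsCompact (derivIter (dder d ε) K ξ) :=
  IsCompact.of_isClosed_subset hKc (derivIter_dder_isClosed hKcl ξ)
    (derivIter_subset (dder_subset d ε) K ξ)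

theorem derivIter_nonempty_limit {d : β → β → ℝ} {ε : ℝ} {K : Set β} (hKc : IsCompact K)
    (hKcl : IsClosed K) {o : Ordinal} (ho : Order.IsSuccLimit o)
    (hne : ∀ ζ < o, (derivIter (dder d ε) K ζ).Nonempty) :
    (derivIter (dder d ε) K o).Nonempty := by
  rw [derivIter_limit _ _ ho]
  haveI : Nonempty (Set.Iio o) := ⟨⟨0, ho.pos⟩⟩
  refine IsCompact.nonempty_iInter_of_directed_nonempty_isCompact_isClosed
    (fun ζ : Set.Iio o => derivIter (dder d ε) K ζ.1) ?_ (fun ζ => hne ζ.1 ζ.2)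
    (fun ζ => derivIter_dder_isCompact hKc hKcl ζ.1)
    (fun ζ => derivIter_dder_isClosed hKcl ζ.1)
  intro i j
  refine ⟨⟨max i.1 j.1, Set.mem_Iio.2 (max_lt (Set.mem_Iio.1 i.2) (Set.mem_Iio.1 j.2))⟩, ?_, ?_⟩
  · exact derivIter_anti (dder_subset d ε) K _ _ (le_max_left _ _)
  · exact derivIter_anti (dder_subset d ε) K _ _ (le_max_right _ _)

end Abstract
universe u

namespace Ordinal

/-- Natural (Hessenberg) sum of ordinals. -/
noncomputable def nadd (a b : Ordinal.{u}) : Ordinal.{u} :=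
  max (⨆ a' : Set.Iio a, Order.succ (nadd a'.1 b)) (⨆ b' : Set.Iio b, Order.succ (nadd a b'.1))
termination_by (a, b)
decreasing_by
  · exact Prod.Lex.left _ _ a'.2
  · exact Prod.Lex.right _ b'.2

end Ordinal

infixl:65 " ♯ " => Ordinal.nadd

namespace Ordinal

theorem nadd_def (a b : Ordinal) : a ♯ b =
    max (⨆ a' : Set.Iio a, Order.succ (a'.1 ♯ b)) (⨆ b' : Set.Iio b, Order.succ (a ♯ b'.1)) := by
  rw [nadd]

theorem nadd_lt_nadd_right {a' a : Ordinal} (h : a' < a) (b : Ordinal) : a' ♯ b < a ♯ b := by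
  rw [nadd_def a b]
  exact lt_of_lt_of_le (Order.lt_succ _) ((Ordinal.le_iSup
    (fun x : Set.Iio a => Order.succ (x.1 ♯ b)) ⟨a', h⟩).trans (le_max_left _ _))

theorem nadd_lt_nadd_left {b' b : Ordinal} (h : b' < b) (a : Ordinal) : a ♯ b' < a ♯ b := by
  rw [nadd_def a b]
  exact lt_of_lt_of_le (Order.lt_succ _) ((Ordinal.le_iSup
    (fun x : Set.Iio b => Order.succ (a ♯ x.1)) ⟨b', h⟩).trans (le_max_right _ _))

theorem nadd_le_nadd_right {a' a : Ordinal} (h : a' ≤ a) (b : Ordinal) : a' ♯ b ≤ a ♯ b := by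
  rcases h.lt_or_eq with h | rfl
  · exact (nadd_lt_nadd_right h b).le
  · exact le_rfl

theorem nadd_le_nadd_left {b' b : Ordinal} (h : b' ≤ b) (a : Ordinal) : a ♯ b' ≤ a ♯ b := by
  rcases h.lt_or_eq with h | rfl
  · exact (nadd_lt_nadd_left h a).le
  · exact le_rfl

theorem nadd_le_iff {a b c : Ordinal} :
    a ♯ b ≤ c ↔ (∀ a' < a, a' ♯ b < c) ∧ ∀ b' < b, a ♯ b' < c := by
  rw [nadd_def, max_le_iff, Ordinal.iSup_le_iff, Ordinal.iSup_le_iff]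
  simp only [Order.succ_le_iff, Subtype.forall, Set.mem_Iio]

theorem nadd_zero (a : Ordinal) : a ♯ 0 = a := by
  induction a using Ordinal.induction with
  | h a IH =>
  apply le_antisymm
  · rw [nadd_le_iff]
    refine ⟨fun a' ha' => by rw [IH a' ha']; exact ha', fun b' hb' => absurd hb' (by simp)⟩
  · refine le_of_forall_lt fun c hc => ?_
    calc c = c ♯ 0 := (IH c hc).symm
      _ < a ♯ 0 := nadd_lt_nadd_right hc 0

theorem nadd_comm (a b : Ordinal) : a ♯ b = b ♯ a := by
  rw [nadd_def a b, nadd_def b a, max_comm]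
  congr 1
  · congr 1; funext x; rw [nadd_comm a x.1]
  · congr 1; funext x; rw [nadd_comm x.1 b]
termination_by (a, b)
decreasing_by
  · exact Prod.Lex.right _ x.2
  · exact Prod.Lex.left _ _ x.2

theorem zero_nadd (a : Ordinal) : 0 ♯ a = a := by
  rw [nadd_comm, nadd_zero]

end Ordinal

section Abstract2



variable {β : Type*} {β' : Type*} [TopologicalSpace β] [TopologicalSpace β']

/-! ### Images under dilation-type maps (lower Lipschitz bound) -/

theorem dder_image {d : β → β → ℝ} {d' : β' → β' → ℝ} {φ : β → β'} (hφ : Continuous φ)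
    {ρ ε : ℝ} (hρ : 0 < ρ) (hε : 0 ≤ ε) {C : Set β} (hbd : DBdd d' (φ '' C))
    (hlow : ∀ p q, ρ * d p q ≤ d' (φ p) (φ q)) :
    φ '' dder d ε C ⊆ dder d' (ρ * ε) (φ '' C) := by
  rintro x ⟨z, ⟨hzC, hz⟩, rfl⟩
  refine ⟨Set.mem_image_of_mem φ hzC, fun W hW hxW => ?_⟩
  obtain ⟨p, hp, q, hq, hpq⟩ :=
    exists_lt_of_lt_ddiam hε (hz (φ ⁻¹' W) (hW.preimage hφ) hxW)
  have h1 : φ p ∈ φ '' C ∩ W := ⟨Set.mem_image_of_mem φ hp.1, hp.2⟩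
  have h2 : φ q ∈ φ '' C ∩ W := ⟨Set.mem_image_of_mem φ hq.1, hq.2⟩
  calc ρ * ε < ρ * d p q := by exact (mul_lt_mul_iff_right₀ hρ).2 hpq
    _ ≤ d' (φ p) (φ q) := hlow p q
    _ ≤ ddiam d' (φ '' C ∩ W) := le_ddiam (hbd.mono Set.inter_subset_left) h1 h2

theorem derivIter_image {d : β → β → ℝ} {d' : β' → β' → ℝ} {φ : β → β'} (hφ : Continuous φ)
    {ρ ε : ℝ} (hρ : 0 < ρ) (hε : 0 ≤ ε) {K : Set β} (hbd : DBdd d' (φ '' K))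
    (hlow : ∀ p q, ρ * d p q ≤ d' (φ p) (φ q)) :
    ∀ ξ, φ '' derivIter (dder d ε) K ξ ⊆ derivIter (dder d' (ρ * ε)) (φ '' K) ξ := by
  intro ξ
  induction ξ using Ordinal.limitRecOn with
  | zero => rw [derivIter_zero, derivIter_zero]
  | add_one o IH =>
      rw [derivIter_add_one, derivIter_add_one]
      refine (dder_image hφ hρ hε ?_ hlow).trans (dder_mono IH ?_)
      · exact hbd.mono (Set.image_mono (derivIter_subset (dder_subset d ε) K o))
      · exact hbd.mono (derivIter_subset (dder_subset d' (ρ*ε)) (φ '' K) o)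
  | limit o ho IH =>
      rw [derivIter_limit _ _ ho, derivIter_limit _ _ ho]
      exact (Set.image_iInter_subset _ φ).trans (Set.iInter_mono (fun ζ => IH ζ.1 ζ.2))

/-! ### Products -/

theorem dder_prod {d : β → β → ℝ} {d' : β' → β' → ℝ} {ε : ℝ} (hε : 0 ≤ ε)
    {A : Set β} {B : Set β'} (hA : DBdd d A) (hB : DBdd d' B) :
    dder (fun p q : β × β' => max (d p.1 q.1) (d' p.2 q.2)) ε (A ×ˢ B) ⊆
      (dder d ε A) ×ˢ B ∪ A ×ˢ (dder d' ε B) := by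
  rintro ⟨x1, x2⟩ ⟨hxAB, hcond⟩
  obtain ⟨hxA, hxB⟩ := hxAB
  by_contra hc
  simp only [Set.mem_union, not_or] at hc
  obtain ⟨hc1, hc2⟩ := hc
  have hx1 : x1 ∉ dder d ε A := fun h => hc1 ⟨h, hxB⟩
  have hx2 : x2 ∉ dder d' ε B := fun h => hc2 ⟨hxA, h⟩
  simp only [dder, Set.mem_setOf_eq, not_and, not_forall, not_lt] at hx1 hx2
  obtain ⟨W, hWo, hxW, hWd⟩ := hx1 hxA
  obtain ⟨V, hVo, hxV, hVd⟩ := hx2 hxB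
  have := hcond (W ×ˢ V) (hWo.prod hVo) ⟨hxW, hxV⟩
  rw [Set.prod_inter_prod] at this
  refine absurd this (not_lt.2 (ddiam_le hε ?_))
  rintro ⟨p1, p2⟩ ⟨hp1, hp2⟩ ⟨q1, q2⟩ ⟨hq1, hq2⟩
  refine max_le ?_ ?_
  · exact (le_ddiam (hA.mono Set.inter_subset_left) hp1 hq1).trans hWd
  · exact (le_ddiam (hB.mono Set.inter_subset_left) hp2 hq2).trans hVd

/-! ### Ranks -/

theorem exists_rank {d : β → β → ℝ} {ε : ℝ} {A : Set β} {x : β} (hx : x ∈ A)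
    {a : Ordinal} (ha : x ∉ derivIter (dder d ε) A a) :
    ∃ r < a, x ∈ derivIter (dder d ε) A r ∧ x ∉ derivIter (dder d ε) A (r + 1) := by
  have hSne : {c : Ordinal | x ∉ derivIter (dder d ε) A c}.Nonempty := ⟨a, ha⟩
  have hmem : x ∉ derivIter (dder d ε) A (sInf {c | x ∉ derivIter (dder d ε) A c}) :=
    csInf_mem hSne
  have hmin : ∀ c < sInf {c | x ∉ derivIter (dder d ε) A c},
      x ∈ derivIter (dder d ε) A c := by
    intro c hc
    by_contra hcn
    have h1 : c ∈ {c : Ordinal | x ∉ derivIter (dder d ε) A c} := hcn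
    exact absurd (csInf_le' h1) (not_le.2 hc)
  rcases Ordinal.zero_or_succ_or_isSuccLimit (sInf {c | x ∉ derivIter (dder d ε) A c})
    with h0 | ⟨r, hr⟩ | hlim
  · rw [h0, derivIter_zero] at hmem
    exact absurd hx hmem
  · refine ⟨r, ?_, ?_, ?_⟩
    · have h1 : sInf {c | x ∉ derivIter (dder d ε) A c} ≤ a := csInf_le' ha
      have h2 : r < sInf {c | x ∉ derivIter (dder d ε) A c} := hr ▸ Order.lt_succ r
      exact lt_of_lt_of_le h2 h1
    · exact hmin r (hr ▸ Order.lt_succ r)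
    · rw [Ordinal.add_one_eq_succ, hr]; exact hmem
  · exfalso
    apply hmem
    rw [derivIter_limit _ _ hlim]
    exact Set.mem_iInter.2 (fun ζ => hmin ζ.1 ζ.2)

/-! ### The natural-sum grid bound for products -/

theorem derivIter_prod_nadd {d : β → β → ℝ} {d' : β' → β' → ℝ} {ν : ℝ} (hν : 0 ≤ ν)
    {A : Set β} {B : Set β'} (hA : DBdd d A) (hB : DBdd d' B)
    (hAcl : IsClosed A) (hBcl : IsClosed B)
    {a₀ b₀ : Ordinal} (ha₀ : derivIter (dder d ν) A a₀ = ∅)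
    (hb₀ : derivIter (dder d' ν) B b₀ = ∅) :
    derivIter (dder (fun p q : β × β' => max (d p.1 q.1) (d' p.2 q.2)) ν) (A ×ˢ B)
      (a₀ ♯ b₀) = ∅ := by
  set d₂ : β × β' → β × β' → ℝ := fun p q => max (d p.1 q.1) (d' p.2 q.2) with hd₂
  have main : ∀ c : Ordinal, ∀ x : β × β', ∀ r₁ r₂ : Ordinal, r₁ ♯ r₂ = c →
      x.1 ∈ (derivIter (dder d ν) A r₁) → x.1 ∉ (derivIter (dder d ν) A (r₁ + 1)) → x.2 ∈ (derivIter (dder d' ν) B r₂) → x.2 ∉ (derivIter (dder d' ν) B (r₂ + 1)) →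
      x ∉ (derivIter (dder d₂ ν) (A ×ˢ B) (c + 1)) := by
    intro c
    induction c using Ordinal.induction with
    | h c IH =>
    intro x r₁ r₂ hc h1 h1' h2 h2' hmem
    rw [derivIter_add_one] at hmem
    obtain ⟨hxc, hcond⟩ := hmem
    -- extract small neighborhoods for the two coordinates
    rw [derivIter_add_one] at h1' h2'
    have hx1 : ∃ W, IsOpen W ∧ x.1 ∈ W ∧ ddiam d ((derivIter (dder d ν) A r₁) ∩ W) ≤ ν := by
      by_contra hcn
      push_neg at hcn
      exact h1' ⟨h1, fun W hW hxW => (hcn W hW hxW)⟩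
    have hx2 : ∃ V, IsOpen V ∧ x.2 ∈ V ∧ ddiam d' ((derivIter (dder d' ν) B r₂) ∩ V) ≤ ν := by
      by_contra hcn
      push_neg at hcn
      exact h2' ⟨h2, fun V hV hxV => (hcn V hV hxV)⟩
    obtain ⟨W, hWo, hxW, hWd⟩ := hx1
    obtain ⟨V, hVo, hxV, hVd⟩ := hx2
    have hclA : IsClosed ((derivIter (dder d ν) A (r₁ + 1))) := derivIter_dder_isClosed hAcl _
    have hclB : IsClosed ((derivIter (dder d' ν) B (r₂ + 1))) := derivIter_dder_isClosed hBcl _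
    set U' : Set β := W \ (derivIter (dder d ν) A (r₁ + 1)) with hU'
    set V' : Set β' := V \ (derivIter (dder d' ν) B (r₂ + 1)) with hV'
    have hU'o : IsOpen U' := hWo.sdiff hclA
    have hV'o : IsOpen V' := hVo.sdiff hclB
    have hxU' : x.1 ∈ U' := ⟨hxW, by rw [derivIter_add_one]; exact h1'⟩
    have hxV' : x.2 ∈ V' := ⟨hxV, by rw [derivIter_add_one]; exact h2'⟩
    have hcd := hcond (U' ×ˢ V') (hU'o.prod hV'o) ⟨hxU', hxV'⟩
    refine absurd hcd (not_lt.2 (ddiam_le hν ?_))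
    have hkey : ∀ y ∈ (derivIter (dder d₂ ν) (A ×ˢ B) c) ∩ U' ×ˢ V', y.1 ∈ (derivIter (dder d ν) A r₁) ∩ W ∧ y.2 ∈ (derivIter (dder d' ν) B r₂) ∩ V := by
      rintro y ⟨hyc, hyU', hyV'⟩
      have hyAB : y ∈ A ×ˢ B := derivIter_subset (dder_subset d₂ ν) (A ×ˢ B) c hyc
      obtain ⟨s₁, hs₁a, hs₁m, hs₁n⟩ := exists_rank hyAB.1 (hyU'.2 : y.1 ∉ (derivIter (dder d ν) A (r₁+1)))
      obtain ⟨s₂, hs₂a, hs₂m, hs₂n⟩ := exists_rank hyAB.2 (hyV'.2 : y.2 ∉ (derivIter (dder d' ν) B (r₂+1)))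
      have hs₁ : s₁ ≤ r₁ := Order.lt_succ_iff.1 (by rwa [Ordinal.add_one_eq_succ] at hs₁a)
      have hs₂ : s₂ ≤ r₂ := Order.lt_succ_iff.1 (by rwa [Ordinal.add_one_eq_succ] at hs₂a)
      have heq : s₁ = r₁ ∧ s₂ = r₂ := by
        by_contra hne
        have hlt : s₁ ♯ s₂ < c := by
          rw [← hc]
          rcases (not_and_or.1 hne) with hne1 | hne2
          · calc s₁ ♯ s₂ ≤ s₁ ♯ r₂ := Ordinal.nadd_le_nadd_left hs₂ s₁
              _ < r₁ ♯ r₂ := Ordinal.nadd_lt_nadd_right (lt_of_le_of_ne hs₁ hne1) r₂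
          · calc s₁ ♯ s₂ ≤ r₁ ♯ s₂ := Ordinal.nadd_le_nadd_right hs₁ s₂
              _ < r₁ ♯ r₂ := Ordinal.nadd_lt_nadd_left (lt_of_le_of_ne hs₂ hne2) r₁
        have := IH (s₁ ♯ s₂) hlt y s₁ s₂ rfl hs₁m hs₁n hs₂m hs₂n
        apply this
        have hle : s₁ ♯ s₂ + 1 ≤ c := by
          rw [Ordinal.add_one_eq_succ]; exact Order.succ_le_iff.2 hlt
        exact derivIter_anti (dder_subset d₂ ν) (A ×ˢ B) c _ hle hyc
      exact ⟨⟨heq.1 ▸ hs₁m, hyU'.1⟩, ⟨heq.2 ▸ hs₂m, hyV'.1⟩⟩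
    intro y hy z hz
    obtain ⟨hy1, hy2⟩ := hkey y hy
    obtain ⟨hz1, hz2⟩ := hkey z hz
    refine max_le ?_ ?_
    · exact (le_ddiam (hA.mono (Set.inter_subset_left.trans
        (derivIter_subset (dder_subset d ν) A r₁))) hy1 hz1).trans hWd
    · exact (le_ddiam (hB.mono (Set.inter_subset_left.trans
        (derivIter_subset (dder_subset d' ν) B r₂))) hy2 hz2).trans hVd
  -- conclude
  rw [Set.eq_empty_iff_forall_notMem]
  intro z hz
  have hzAB : z ∈ A ×ˢ B := derivIter_subset (dder_subset d₂ ν) (A ×ˢ B) _ hz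
  obtain ⟨r₁, hr₁a, hr₁m, hr₁n⟩ := exists_rank hzAB.1 (by rw [ha₀]; exact Set.notMem_empty _)
  obtain ⟨r₂, hr₂a, hr₂m, hr₂n⟩ := exists_rank hzAB.2 (by rw [hb₀]; exact Set.notMem_empty _)
  refine main (r₁ ♯ r₂) z r₁ r₂ rfl hr₁m hr₁n hr₂m hr₂n ?_
  have hlt : r₁ ♯ r₂ < a₀ ♯ b₀ :=
    lt_of_lt_of_le (Ordinal.nadd_lt_nadd_right hr₁a r₂) (Ordinal.nadd_le_nadd_left hr₂a.le a₀)
  have hle : r₁ ♯ r₂ + 1 ≤ a₀ ♯ b₀ := by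
    rw [Ordinal.add_one_eq_succ]; exact Order.succ_le_iff.2 hlt
  exact derivIter_anti (dder_subset d₂ ν) (A ×ˢ B) _ _ hle hz

end Abstract2
section Abstract3

variable {β : Type*} {β' : Type*} [TopologicalSpace β] [TopologicalSpace β'] [T2Space β']

/-- One-step image lemma: a `w*`-continuous, norm-Lipschitz image of a compact set has
its derivation controlled by the derivation of the source. -/
theorem dder_image_lip {d : β → β → ℝ} {d' : β' → β' → ℝ} {φ : β → β'} (hφ : Continuous φ)
    {L ν ε' : ℝ} (hL : 0 ≤ L) (hν : 0 ≤ ν) (hε' : 2 * (L * ν) ≤ ε')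
    {C' : Set β} (hC' : IsCompact C') (hbdC : DBdd d C')
    (hlip : ∀ p q, d' (φ p) (φ q) ≤ L * d p q)
    (htri : ∀ u v w : β', d' u w ≤ d' u v + d' v w)
    (hsym : ∀ u v : β', d' u v = d' v u) :
    dder d' ε' (φ '' C') ⊆ φ '' dder d ν C' := by
  intro x hx
  obtain ⟨hxim, hcond⟩ := hx
  by_cases hF : ((C' ∩ φ ⁻¹' {x}) ∩ dder d ν C').Nonempty
  · obtain ⟨z, ⟨⟨hzC, hzx⟩, hzd⟩⟩ := hF
    exact ⟨z, hzd, hzx⟩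
  · exfalso
    rw [Set.not_nonempty_iff_eq_empty] at hF
    set F : Set β := C' ∩ φ ⁻¹' {x} with hFdef
    have hFne : F.Nonempty := by
      obtain ⟨z, hz, hzx⟩ := hxim
      exact ⟨z, hz, by simp [hzx]⟩
    have hFc : IsCompact F := hC'.inter_right (isClosed_singleton.preimage hφ)
    have hW : ∀ z : F, ∃ W, IsOpen W ∧ z.1 ∈ W ∧ ddiam d (C' ∩ W) ≤ ν := by
      rintro ⟨z, hzF⟩
      have hznd : z ∉ dder d ν C' := by
        intro hzd
        exact Set.eq_empty_iff_forall_notMem.1 hF z ⟨hzF, hzd⟩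
      simp only [dder, Set.mem_setOf_eq, not_and, not_forall, not_lt] at hznd
      obtain ⟨W, hWo, hzW, hWd⟩ := hznd hzF.1
      exact ⟨W, hWo, hzW, hWd⟩
    choose W hWo hWz hWd using hW
    obtain ⟨t, ht⟩ := hFc.elim_finite_subcover W hWo
      (fun z hz => Set.mem_iUnion.2 ⟨⟨z, hz⟩, hWz ⟨z, hz⟩⟩)
    set U : Set β := ⋃ i ∈ t, W i with hUdef
    have hUo : IsOpen U := isOpen_biUnion (fun i _ => hWo i)
    have hG : IsCompact (C' \ U) := hC'.diff hUo
    have hGcl : IsClosed (φ '' (C' \ U)) := (hG.image hφ).isClosed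
    have hxV : x ∈ (φ '' (C' \ U))ᶜ := by
      rintro ⟨g, ⟨hgC, hgU⟩, hgx⟩
      exact hgU (ht ⟨hgC, by simp [hgx]⟩)
    have hcd := hcond _ hGcl.isOpen_compl hxV
    refine absurd hcd (not_lt.2 (ddiam_le (le_trans (by positivity) hε') ?_))
    have hkey : ∀ y ∈ φ '' C' ∩ (φ '' (C' \ U))ᶜ, d' y x ≤ L * ν := by
      rintro y ⟨⟨z, hzC, rfl⟩, hyV⟩
      have hzU : z ∈ U := by
        by_contra hzU
        exact hyV ⟨z, ⟨hzC, hzU⟩, rfl⟩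
      obtain ⟨i, hit, hzW⟩ := Set.mem_iUnion₂.1 hzU
      have hdzi : d z i.1 ≤ ν :=
        (le_ddiam (hbdC.mono Set.inter_subset_left) ⟨hzC, hzW⟩ ⟨i.2.1, hWz i⟩).trans (hWd i)
      have hφi : φ i.1 = x := i.2.2
      calc d' (φ z) x = d' (φ z) (φ i.1) := by rw [hφi]
        _ ≤ L * d z i.1 := hlip z i.1
        _ ≤ L * ν := by exact mul_le_mul_of_nonneg_left hdzi hL
    intro y hy z hz
    calc d' y z ≤ d' y x + d' x z := htri y x z
      _ = d' y x + d' z x := by rw [hsym x z]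
      _ ≤ L * ν + L * ν := add_le_add (hkey y hy) (hkey z hz)
      _ = 2 * (L * ν) := by ring
      _ ≤ ε' := hε'

theorem derivIter_image_lip {d : β → β → ℝ} {d' : β' → β' → ℝ} {φ : β → β'} (hφ : Continuous φ)
    {L ν ε' : ℝ} (hL : 0 ≤ L) (hν : 0 ≤ ν) (hε' : 2 * (L * ν) ≤ ε')
    {C : Set β} (hC : IsCompact C) (hCcl : IsClosed C) (hbdC : DBdd d C)
    (hbdD : DBdd d' (φ '' C))
    (hlip : ∀ p q, d' (φ p) (φ q) ≤ L * d p q)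
    (htri : ∀ u v w : β', d' u w ≤ d' u v + d' v w)
    (hsym : ∀ u v : β', d' u v = d' v u) :
    ∀ ξ, derivIter (dder d' ε') (φ '' C) ξ ⊆ φ '' derivIter (dder d ν) C ξ := by
  intro ξ
  induction ξ using Ordinal.limitRecOn with
  | zero => rw [derivIter_zero, derivIter_zero]
  | add_one o IH =>
      rw [derivIter_add_one, derivIter_add_one]
      refine (dder_mono IH ?_).trans ?_
      · exact hbdD.mono (Set.image_mono (derivIter_subset (dder_subset d ν) C o))
      · exact dder_image_lip hφ hL hν hε' (derivIter_dder_isCompact hC hCcl o)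
          (hbdC.mono (derivIter_subset (dder_subset d ν) C o)) hlip htri hsym
  | limit o ho IH =>
      rw [derivIter_limit _ _ ho, derivIter_limit _ _ ho]
      intro x hx
      have hx' : ∀ ζ : Set.Iio o, x ∈ φ '' derivIter (dder d ν) C ζ.1 := by
        intro ζ
        exact IH ζ.1 ζ.2 (Set.mem_iInter.1 hx ζ)
      haveI : Nonempty (Set.Iio o) := ⟨⟨0, ho.pos⟩⟩
      have hne : (⋂ ζ : Set.Iio o, (derivIter (dder d ν) C ζ.1 ∩ φ ⁻¹' {x})).Nonempty := by
        refine IsCompact.nonempty_iInter_of_directed_nonempty_isCompact_isClosed _ ?_ ?_ ?_ ?_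
        · intro i j
          refine ⟨⟨max i.1 j.1,
            Set.mem_Iio.2 (max_lt (Set.mem_Iio.1 i.2) (Set.mem_Iio.1 j.2))⟩, ?_, ?_⟩
          · exact Set.inter_subset_inter_left _
              (derivIter_anti (dder_subset d ν) C _ _ (le_max_left _ _))
          · exact Set.inter_subset_inter_left _
              (derivIter_anti (dder_subset d ν) C _ _ (le_max_right _ _))
        · intro ζ
          obtain ⟨z, hz, hzx⟩ := hx' ζ
          exact ⟨z, hz, by simp [hzx]⟩
        · intro ζ
          exact (derivIter_dder_isCompact hC hCcl ζ.1).inter_right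
            (isClosed_singleton.preimage hφ)
        · intro ζ
          exact (derivIter_dder_isClosed hCcl ζ.1).inter (isClosed_singleton.preimage hφ)
      obtain ⟨z, hz⟩ := hne
      have hz1 : ∀ ζ : Set.Iio o, z ∈ derivIter (dder d ν) C ζ.1 := by
        intro ζ
        exact (Set.mem_iInter.1 hz ζ).1
      have hz2 : φ z = x := by
        have := (Set.mem_iInter.1 hz ⟨0, ho.pos⟩).2
        simpa using this
      exact ⟨z, Set.mem_iInter.2 hz1, hz2⟩

end Abstract3
section NaddPrincipal

open Ordinal
open scoped Ordinal

theorem nadd_lt_omega0_opow :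
    ∀ c : Ordinal, ∀ a b : Ordinal, a < ω ^ c → b < ω ^ c → a ♯ b < ω ^ c := by
  intro c
  induction c using Ordinal.induction with
  | h c IHc =>
  rcases Ordinal.zero_or_succ_or_isSuccLimit c with rfl | ⟨d, rfl⟩ | hc
  · intro a b ha hb
    rw [Ordinal.opow_zero] at *
    rw [Ordinal.lt_one_iff_zero.1 ha, Ordinal.lt_one_iff_zero.1 hb, Ordinal.nadd_zero]
    exact zero_lt_one
  · -- successor case
    have THMd : ∀ a b : Ordinal, a < ω ^ d → b < ω ^ d → a ♯ b < ω ^ d :=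
      IHc d (Order.lt_succ d)
    have hone : (ω ^ d : Ordinal) ≠ 0 := Ordinal.opow_ne_zero d Ordinal.omega0_ne_zero
    have hsucc : (ω : Ordinal) ^ Order.succ d = ω ^ d * ω := Ordinal.opow_succ ω d
    -- absorption is impossible below ω ^ (d+1)
    have habs : ∀ b, b < ω ^ Order.succ d → ω ^ d + b ≠ b := by
      intro b hb heq
      have h1 : ∀ n : ℕ, ω ^ d * n + b = b := by
        intro n
        induction n with
        | zero => simp
        | succ n ih =>
            have hcast : ((n + 1 : ℕ) : Ordinal) = (n : Ordinal) + 1 := by push_cast; ring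
            rw [hcast, mul_add, mul_one, add_assoc, heq, ih]
      have h2 : ω ^ d * ω ≤ b := by
        rw [Ordinal.mul_le_iff_of_isSuccLimit Ordinal.isSuccLimit_omega0]
        intro b' hb'
        obtain ⟨n, rfl⟩ := Ordinal.lt_omega0.1 hb'
        calc ω ^ d * n ≤ ω ^ d * n + b := le_self_add
          _ = b := h1 n
      rw [← hsucc] at h2
      exact absurd hb (not_lt.2 h2)
    -- pulling out a leading ω ^ d from the second argument
    have ID2 : ∀ y, ∀ x, x < ω ^ d → x ♯ (ω ^ d + y) ≤ ω ^ d + (x ♯ y) := by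
      intro y
      induction y using Ordinal.induction with
      | h y IHy =>
      intro x
      induction x using Ordinal.induction with
      | h x IHx =>
      intro hx
      rw [Ordinal.nadd_le_iff]
      constructor
      · intro x' hx'
        calc x' ♯ (ω ^ d + y) ≤ ω ^ d + (x' ♯ y) := IHx x' hx' (hx'.trans hx)
          _ < ω ^ d + (x ♯ y) := add_lt_add_right (Ordinal.nadd_lt_nadd_right hx' y) _
      · intro z hz
        by_cases hzd : z < ω ^ d
        · exact lt_of_lt_of_le (THMd x z hx hzd) (le_self_add)
        · push_neg at hzd
          have hy' : ω ^ d + (z - ω ^ d) = z := Ordinal.add_sub_cancel_of_le hzd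
          have hy'lt : z - ω ^ d < y := by
            have h3 : ω ^ d + (z - ω ^ d) < ω ^ d + y := by rw [hy']; exact hz
            exact (add_lt_add_iff_left _).1 h3
          calc x ♯ z = x ♯ (ω ^ d + (z - ω ^ d)) := by rw [hy']
            _ ≤ ω ^ d + (x ♯ (z - ω ^ d)) := IHy _ hy'lt x hx
            _ < ω ^ d + (x ♯ y) := add_lt_add_right (Ordinal.nadd_lt_nadd_left hy'lt x) _
    -- the crucial estimate x ♯ b < ω ^ d + b
    have CL2 : ∀ b, b < ω ^ Order.succ d → ∀ x, x < ω ^ d → x ♯ b < ω ^ d + b := by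
      intro b
      induction b using Ordinal.induction with
      | h b IHb =>
      intro hb x hx
      by_cases hbd : b < ω ^ d
      · exact lt_of_lt_of_le (THMd x b hx hbd) (le_self_add)
      · push_neg at hbd
        have hb1 : ω ^ d + (b - ω ^ d) = b := Ordinal.add_sub_cancel_of_le hbd
        have hlt : b - ω ^ d < b := by
          rcases lt_or_eq_of_le (Ordinal.sub_le_self b (ω ^ d)) with h | h
          · exact h
          · exact absurd (by rw [h] at hb1; exact hb1) (habs b hb)
        have hsub : b - ω ^ d < ω ^ Order.succ d :=
          lt_of_le_of_lt (Ordinal.sub_le_self b (ω ^ d)) hb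
        calc x ♯ b = x ♯ (ω ^ d + (b - ω ^ d)) := by rw [hb1]
          _ ≤ ω ^ d + (x ♯ (b - ω ^ d)) := ID2 _ x hx
          _ < ω ^ d + (ω ^ d + (b - ω ^ d)) := add_lt_add_right (IHb _ hlt hsub x hx) _
          _ = ω ^ d + b := by rw [hb1]
    -- the decomposition estimate
    have ID : ∀ a, ∀ b, b < ω ^ Order.succ d → ∀ p r : Ordinal, p < ω → r < ω ^ d →
        a = ω ^ d * p + r → a ♯ b ≤ ω ^ d * p + (r ♯ b) := by
      intro a
      induction a using Ordinal.induction with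
      | h a IHa =>
      intro b
      induction b using Ordinal.induction with
      | h b IHb =>
      intro hb p r hp hr ha
      rw [Ordinal.nadd_le_iff]
      constructor
      · intro a' ha'a
        have hdec : a' = ω ^ d * (a' / ω ^ d) + a' % ω ^ d := (Ordinal.div_add_mod a' _).symm
        have hr' : a' % ω ^ d < ω ^ d := Ordinal.mod_lt a' hone
        have hp'le : a' / ω ^ d ≤ p := by
          have h1 : a' < ω ^ d * (p + 1) := by
            calc a' < a := ha'a
              _ = ω ^ d * p + r := ha
              _ < ω ^ d * p + ω ^ d := add_lt_add_right hr _
              _ = ω ^ d * (p + 1) := by rw [mul_add, mul_one]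
          have h2 := (Ordinal.div_lt hone).2 h1
          exact Order.lt_succ_iff.1 (by rwa [Ordinal.add_one_eq_succ] at h2)
        rcases eq_or_lt_of_le hp'le with heq | hplt
        · have hr'r : a' % ω ^ d < r := by
            have h4 : ω ^ d * p + a' % ω ^ d = a' := by rw [← heq]; exact hdec.symm
            have h3 : a' < ω ^ d * p + r := by rw [← ha]; exact ha'a
            exact (add_lt_add_iff_left _).1 (by rw [h4]; exact h3)
          calc a' ♯ b ≤ ω ^ d * (a' / ω ^ d) + ((a' % ω ^ d) ♯ b) :=
              IHa a' ha'a b hb _ _ (lt_of_le_of_lt hp'le hp) hr' hdec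
            _ = ω ^ d * p + ((a' % ω ^ d) ♯ b) := by rw [heq]
            _ < ω ^ d * p + (r ♯ b) := add_lt_add_right (Ordinal.nadd_lt_nadd_right hr'r b) _
        · have hb0 : b ≤ r ♯ b := by
            calc b = 0 ♯ b := (Ordinal.zero_nadd b).symm
              _ ≤ r ♯ b := Ordinal.nadd_le_nadd_right (zero_le) b
          calc a' ♯ b ≤ ω ^ d * (a' / ω ^ d) + ((a' % ω ^ d) ♯ b) :=
              IHa a' ha'a b hb _ _ (hp'le.trans_lt hp) hr' hdec
            _ < ω ^ d * (a' / ω ^ d) + (ω ^ d + b) := add_lt_add_right (CL2 b hb _ hr') _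
            _ = ω ^ d * (a' / ω ^ d + 1) + b := by rw [mul_add, mul_one, add_assoc]
            _ ≤ ω ^ d * p + b := by
                refine add_le_add_left (mul_le_mul_right ?_ _) b
                rw [Ordinal.add_one_eq_succ]; exact Order.succ_le_iff.2 hplt
            _ ≤ ω ^ d * p + (r ♯ b) := add_le_add_right hb0 _
      · intro b' hb'
        calc a ♯ b' ≤ ω ^ d * p + (r ♯ b') := IHb b' hb' (hb'.trans hb) p r hp hr ha
          _ < ω ^ d * p + (r ♯ b) := add_lt_add_right (Ordinal.nadd_lt_nadd_left hb' r) _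
    -- assemble the successor case
    intro a b ha hb
    have hp : a / ω ^ d < ω := (Ordinal.div_lt hone).2 (by rwa [← hsucc])
    have hq : b / ω ^ d < ω := (Ordinal.div_lt hone).2 (by rwa [← hsucc])
    have hra : a % ω ^ d < ω ^ d := Ordinal.mod_lt a hone
    have hrb : b % ω ^ d < ω ^ d := Ordinal.mod_lt b hone
    have hda : a = ω ^ d * (a / ω ^ d) + a % ω ^ d := (Ordinal.div_add_mod a _).symm
    have hdb : b = ω ^ d * (b / ω ^ d) + b % ω ^ d := (Ordinal.div_add_mod b _).symm
    have hralt : a % ω ^ d < ω ^ Order.succ d :=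
      hra.trans_le (Ordinal.opow_le_opow_right Ordinal.omega0_pos (Order.le_succ d))
    have step1 : a ♯ b ≤ ω ^ d * (a / ω ^ d) + ((a % ω ^ d) ♯ b) := ID a b hb _ _ hp hra hda
    have step3 : b ♯ (a % ω ^ d) ≤ ω ^ d * (b / ω ^ d) + ((b % ω ^ d) ♯ (a % ω ^ d)) :=
      ID b _ hralt _ _ hq hrb hdb
    have step4 : (b % ω ^ d) ♯ (a % ω ^ d) < ω ^ d := THMd _ _ hrb hra
    have hfin : a / ω ^ d + (b / ω ^ d + 1) < ω := by
      obtain ⟨m, hm⟩ := Ordinal.lt_omega0.1 hp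
      obtain ⟨n, hn⟩ := Ordinal.lt_omega0.1 hq
      rw [hm, hn]
      have : (m : Ordinal) + ((n : Ordinal) + 1) = ((m + (n + 1) : ℕ) : Ordinal) := by
        push_cast; ring
      rw [this]
      exact Ordinal.nat_lt_omega0 _
    calc a ♯ b ≤ ω ^ d * (a / ω ^ d) + (b ♯ (a % ω ^ d)) := by
          rw [Ordinal.nadd_comm b (a % ω ^ d)]; exact step1
      _ ≤ ω ^ d * (a / ω ^ d) + (ω ^ d * (b / ω ^ d) + ((b % ω ^ d) ♯ (a % ω ^ d))) :=
          add_le_add_right step3 _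
      _ < ω ^ d * (a / ω ^ d) + (ω ^ d * (b / ω ^ d) + ω ^ d) :=
          add_lt_add_right (add_lt_add_right step4 _) _
      _ = ω ^ d * (a / ω ^ d + (b / ω ^ d + 1)) := by rw [mul_add, mul_add, mul_one]
      _ < ω ^ d * ω :=
          (mul_lt_mul_iff_right₀ (Ordinal.opow_pos d Ordinal.omega0_pos)).2 hfin
      _ = ω ^ Order.succ d := hsucc.symm
  · -- limit case
    intro a b ha hb
    obtain ⟨c₁, hc₁, ha₁⟩ := (Ordinal.lt_opow_of_isSuccLimit Ordinal.omega0_ne_zero hc).1 ha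
    obtain ⟨c₂, hc₂, hb₂⟩ := (Ordinal.lt_opow_of_isSuccLimit Ordinal.omega0_ne_zero hc).1 hb
    have h1 : a < ω ^ max c₁ c₂ :=
      ha₁.trans_le (Ordinal.opow_le_opow_right Ordinal.omega0_pos (le_max_left _ _))
    have h2 : b < ω ^ max c₁ c₂ :=
      hb₂.trans_le (Ordinal.opow_le_opow_right Ordinal.omega0_pos (le_max_right _ _))
    exact (IHc _ (max_lt hc₁ hc₂) a b h1 h2).trans_le
      (Ordinal.opow_le_opow_right Ordinal.omega0_pos (max_lt hc₁ hc₂).le)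

theorem nadd_lt_of_principal {α a b : Ordinal} (h : Ordinal.Principal (· + ·) α)
    (hα : α ≠ 0) (ha : a < α) (hb : b < α) : a ♯ b < α := by
  rcases Ordinal.isPrincipal_add_iff_zero_or_omega0_opow.1 h with rfl | ⟨c, hc⟩
  · exact absurd rfl hα
  · rw [← hc] at ha hb ⊢
    exact nadd_lt_omega0_opow c a b ha hb

/-- An additively principal ordinal `> 1` is a limit ordinal. -/
theorem principal_add_isLimit_of_one_lt {α : Ordinal} (h : Ordinal.Principal (· + ·) α)
    (h1 : 1 < α) : Order.IsSuccLimit α := by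
  rcases Ordinal.zero_or_succ_or_isSuccLimit α with rfl | ⟨γ, hγ⟩ | hlim
  · exact absurd h1 (by simp)
  · exfalso
    have hγlt : γ < α := hγ ▸ Order.lt_succ γ
    have := h hγlt h1
    rw [← hγ, ← Ordinal.add_one_eq_succ] at this
    exact lt_irrefl _ this
  · exact hlim

end NaddPrincipal
section Concrete

variable {X : Type*} [NormedAddCommGroup X] [NormedSpace ℝ X]

/-- The dual-norm distance on the weak-star dual. -/
noncomputable def wdist (f g : WeakDual ℝ X) : ℝ :=
  dist (WeakDual.toStrongDual f) (WeakDual.toStrongDual g)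

theorem wdist_triangle (u v w : WeakDual ℝ X) : wdist u w ≤ wdist u v + wdist v w :=
  dist_triangle _ _ _

theorem wdist_comm (u v : WeakDual ℝ X) : wdist u v = wdist v u :=
  dist_comm _ _

theorem wdist_add_right (p q y : WeakDual ℝ X) : wdist (p + y) (q + y) = wdist p q := by
  unfold wdist
  rw [map_add, map_add]
  exact dist_add_right _ _ _

theorem wdist_half (p q y : WeakDual ℝ X) :
    wdist ((2⁻¹ : ℝ) • (p + y)) ((2⁻¹ : ℝ) • (q + y)) = 2⁻¹ * wdist p q := by
  unfold wdist
  rw [map_smul, map_smul, dist_smul₀ (β := StrongDual ℝ X), map_add, map_add, dist_add_right]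
  norm_num

theorem wdist_toWeakDual (f g : StrongDual ℝ X) :
    wdist (StrongDual.toWeakDual f) (StrongDual.toWeakDual g) = dist f g := rfl

theorem wdist_add_le (p q : (WeakDual ℝ X) × (WeakDual ℝ X)) :
    wdist (p.1 + p.2) (q.1 + q.2) ≤
      2 * max (wdist p.1 q.1) (wdist p.2 q.2) := by
  unfold wdist
  rw [map_add, map_add]
  calc dist (WeakDual.toStrongDual p.1 + WeakDual.toStrongDual p.2)
        (WeakDual.toStrongDual q.1 + WeakDual.toStrongDual q.2) ≤
      dist (WeakDual.toStrongDual p.1) (WeakDual.toStrongDual q.1) +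
        dist (WeakDual.toStrongDual p.2) (WeakDual.toStrongDual q.2) := dist_add_add_le _ _ _ _
    _ ≤ max (wdist p.1 q.1) (wdist p.2 q.2) + max (wdist p.1 q.1) (wdist p.2 q.2) :=
        add_le_add (le_max_left _ _) (le_max_right _ _)
    _ = 2 * max (wdist p.1 q.1) (wdist p.2 q.2) := by ring

/-- Weak-star compact sets are norm-bounded (Banach–Steinhaus). -/
theorem dbdd_of_isCompact [CompleteSpace X] {S : Set (WeakDual ℝ X)} (hS : IsCompact S) :
    DBdd wdist S := by
  have hpt : ∀ x : X, ∃ C : ℝ, ∀ i : S, ‖(WeakDual.toStrongDual i.1) x‖ ≤ C := by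
    intro x
    have h1 : IsCompact ((fun f : WeakDual ℝ X => f x) '' S) :=
      hS.image (WeakDual.eval_continuous x)
    obtain ⟨r, hr⟩ := h1.isBounded.subset_closedBall 0
    refine ⟨r, fun i => ?_⟩
    have h2 := hr (Set.mem_image_of_mem _ i.2)
    rwa [Metric.mem_closedBall, dist_zero_right] at h2
  obtain ⟨C, hC⟩ := banach_steinhaus hpt
  refine ⟨C + C, fun f hf g hg => ?_⟩
  calc wdist f g ≤ ‖WeakDual.toStrongDual f‖ + ‖WeakDual.toStrongDual g‖ :=
      dist_le_norm_add_norm _ _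
    _ ≤ C + C := add_le_add (hC ⟨f, hf⟩) (hC ⟨g, hg⟩)

/-- Halving a set towards one of its points, iterated derivation version. -/
theorem derivIter_halving {K : Set (WeakDual ℝ X)} (hconv : Convex ℝ K)
    (hbd : DBdd wdist K) {ε : ℝ} (hε : 0 ≤ ε) {y : WeakDual ℝ X} (hy : y ∈ K) (ξ : Ordinal) :
    (fun z => (2⁻¹ : ℝ) • (z + y)) '' derivIter (dder wdist ε) K ξ ⊆
      derivIter (dder wdist (2⁻¹ * ε)) K ξ := by
  have himg : (fun z : WeakDual ℝ X => (2⁻¹ : ℝ) • (z + y)) '' K ⊆ K := by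
    rintro _ ⟨z, hz, rfl⟩
    have h1 : (2⁻¹ : ℝ) • z + (2⁻¹ : ℝ) • y ∈ K :=
      hconv hz hy (by norm_num) (by norm_num) (by norm_num)
    rwa [← smul_add] at h1
  have hTc : Continuous (fun z : WeakDual ℝ X => (2⁻¹ : ℝ) • (z + y)) :=
    (continuous_id.add continuous_const).const_smul (2⁻¹ : ℝ)
  refine (derivIter_image hTc (by norm_num : (0:ℝ) < 2⁻¹) hε (hbd.mono himg) ?_ ξ).trans
    (derivIter_dder_mono himg hbd ξ)
  intro p q
  rw [wdist_half]

/-- The key convexity lemma: midpoints of surviving points survive for the ordinal sum. -/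
theorem derivIter_midpoint {K : Set (WeakDual ℝ X)} (hconv : Convex ℝ K)
    (hbd : DBdd wdist K) {ε : ℝ} (hε : 0 ≤ ε) :
    ∀ γ₂ γ₁ : Ordinal, ∀ x ∈ derivIter (dder wdist ε) K γ₁,
      ∀ t ∈ derivIter (dder wdist ε) K γ₂,
      (2⁻¹ : ℝ) • (x + t) ∈ derivIter (dder wdist (2⁻¹ * ε)) K (γ₁ + γ₂) := by
  intro γ₂
  induction γ₂ using Ordinal.limitRecOn with
  | zero =>
      intro γ₁ x hx t ht
      rw [derivIter_zero] at ht
      rw [add_zero]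
      exact derivIter_halving hconv hbd hε ht γ₁ ⟨x, hx, rfl⟩
  | add_one η IH =>
      intro γ₁ x hx t ht
      rw [derivIter_add_one] at ht
      obtain ⟨htη, hcond⟩ := ht
      rw [← add_assoc, derivIter_add_one]
      refine ⟨IH γ₁ x hx t htη, ?_⟩
      intro W hW hmW
      have hTc : Continuous (fun z : WeakDual ℝ X => (2⁻¹ : ℝ) • (x + z)) :=
        (continuous_const.add continuous_id).const_smul (2⁻¹ : ℝ)
      have h1 := hcond ((fun z : WeakDual ℝ X => (2⁻¹ : ℝ) • (x + z)) ⁻¹' W)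
        (hW.preimage hTc) hmW
      obtain ⟨p, hp, q, hq, hpq⟩ := exists_lt_of_lt_ddiam hε h1
      have hTp : (2⁻¹ : ℝ) • (x + p) ∈ derivIter (dder wdist (2⁻¹ * ε)) K (γ₁ + η) :=
        IH γ₁ x hx p hp.1
      have hTq : (2⁻¹ : ℝ) • (x + q) ∈ derivIter (dder wdist (2⁻¹ * ε)) K (γ₁ + η) :=
        IH γ₁ x hx q hq.1
      have hd : 2⁻¹ * ε < wdist ((2⁻¹ : ℝ) • (x + p)) ((2⁻¹ : ℝ) • (x + q)) := by
        have heq : wdist ((2⁻¹ : ℝ) • (x + p)) ((2⁻¹ : ℝ) • (x + q)) = 2⁻¹ * wdist p q := by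
          rw [wdist_comm]
          rw [show x + p = p + x from add_comm x p, show x + q = q + x from add_comm x q] at *
          rw [wdist_half, wdist_comm]
        rw [heq]
        exact (mul_lt_mul_iff_right₀ (by norm_num)).2 hpq
      refine lt_of_lt_of_le hd (le_ddiam ?_ ⟨hTp, hp.2⟩ ⟨hTq, hq.2⟩)
      exact (hbd.mono (derivIter_subset (dder_subset wdist (2⁻¹ * ε)) K (γ₁ + η))).mono
        Set.inter_subset_left
  | limit lam hlam IH =>
      intro γ₁ x hx t ht
      have hlim2 : Order.IsSuccLimit (γ₁ + lam) := Ordinal.isSuccLimit_add γ₁ hlam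
      rw [derivIter_limit _ _ hlim2]
      refine Set.mem_iInter.2 ?_
      rintro ⟨c, hc⟩
      rcases le_or_gt c γ₁ with hcγ | hγc
      · have h0 : t ∈ derivIter (dder wdist ε) K 0 :=
          derivIter_anti (dder_subset wdist ε) K lam 0 zero_le ht
        have h1 := IH 0 hlam.pos γ₁ x hx t h0
        refine derivIter_anti (dder_subset wdist (2⁻¹ * ε)) K (γ₁ + 0) c ?_ h1
        rwa [add_zero]
      · have hce : γ₁ + (c - γ₁) = c := Ordinal.add_sub_cancel_of_le hγc.le
        have helam : c - γ₁ < lam := by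
          by_contra hh
          push_neg at hh
          have h2 : γ₁ + lam ≤ γ₁ + (c - γ₁) := add_le_add_right hh γ₁
          rw [hce] at h2
          exact absurd (Set.mem_Iio.1 hc) (not_lt.2 h2)
        have hte : t ∈ derivIter (dder wdist ε) K (c - γ₁) :=
          derivIter_anti (dder_subset wdist ε) K lam _ helam.le ht
        have h1 := IH _ helam γ₁ x hx t hte
        rwa [hce] at h1

/-! ### Bridging `szSlice` with the abstract derivation -/

theorem diam_eq_ddiam_w (C : Set (StrongDual ℝ X)) (W : Set (WeakDual ℝ X)) :
    Metric.diam (C ∩ (fun g => StrongDual.toWeakDual g) ⁻¹' W) =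
      ddiam wdist ((fun g => StrongDual.toWeakDual g) '' C ∩ W) := by
  rw [← Set.image_inter_preimage]
  rw [diam_eq_ddiam]
  unfold ddiam
  congr 1
  congr 1
  rw [Set.image2_image_left, Set.image2_image_right]
  rfl

theorem szSlice_eq_dder (ε : ℝ) (C : Set (StrongDual ℝ X)) :
    (fun f => StrongDual.toWeakDual f) '' szSlice ε C =
      dder wdist ε ((fun f => StrongDual.toWeakDual f) '' C) := by
  ext g
  constructor
  · rintro ⟨f, ⟨hfC, hcond⟩, rfl⟩
    refine ⟨Set.mem_image_of_mem _ hfC, fun W hW hgW => ?_⟩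
    have h1 := hcond W hW hgW
    rwa [diam_eq_ddiam_w] at h1
  · rintro ⟨⟨f, hfC, rfl⟩, hcond⟩
    refine ⟨f, ⟨hfC, fun W hW hfW => ?_⟩, rfl⟩
    have h1 := hcond W hW hfW
    rwa [← diam_eq_ddiam_w] at h1

theorem derivIter_bridge (ε : ℝ) (C : Set (StrongDual ℝ X)) :
    ∀ ξ, (fun f => StrongDual.toWeakDual f) '' derivIter (szSlice ε) C ξ =
      derivIter (dder wdist ε) ((fun f => StrongDual.toWeakDual f) '' C) ξ := by
  have hbij : Function.Bijective (fun f : StrongDual ℝ X =>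
      StrongDual.toWeakDual f) := (StrongDual.toWeakDual).bijective
  intro ξ
  induction ξ using Ordinal.limitRecOn with
  | zero => rw [derivIter_zero, derivIter_zero]
  | add_one o IH => rw [derivIter_add_one, derivIter_add_one, ← IH, szSlice_eq_dder]
  | limit o ho IH =>
      rw [derivIter_limit _ _ ho, derivIter_limit _ _ ho, Set.image_iInter hbij]
      exact Set.iInter_congr fun ζ => IH ζ.1 ζ.2

theorem bridge_nonempty (ε : ℝ) (C : Set (StrongDual ℝ X)) (ξ : Ordinal) :
    (derivIter (szSlice ε) C ξ).Nonempty ↔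
      (derivIter (dder wdist ε) ((fun f => StrongDual.toWeakDual f) '' C) ξ).Nonempty := by
  rw [← derivIter_bridge, Set.image_nonempty]

theorem image_add_set (K L : Set (StrongDual ℝ X)) :
    (fun f => StrongDual.toWeakDual f) '' (K + L) =
      ((fun f => StrongDual.toWeakDual f) '' K) +
        ((fun f => StrongDual.toWeakDual f) '' L) := by
  ext g
  simp only [Set.mem_add, Set.mem_image]
  constructor
  · rintro ⟨f, ⟨a, ha, b, hb, rfl⟩, rfl⟩
    exact ⟨_, ⟨a, ha, rfl⟩, _, ⟨b, hb, rfl⟩, (map_add _ a b).symm⟩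
  · rintro ⟨u, ⟨a, ha, rfl⟩, v, ⟨b, hb, rfl⟩, rfl⟩
    exact ⟨a + b, ⟨a, ha, b, hb, rfl⟩, map_add _ a b⟩

end Concrete
section Main



variable {X : Type*} [NormedAddCommGroup X] [NormedSpace ℝ X]

/-- The hard inequality: if both convex `w*`-compact sets have empty `ξ`-th derived sets
for all `ε`, then so does their Minkowski sum. -/
theorem sum_derivIter_empty [CompleteSpace X] {A B : Set (WeakDual ℝ X)}
    (hAc : IsCompact A) (hBc : IsCompact B) (hAne : A.Nonempty) (hBne : B.Nonempty)
    (hAconv : Convex ℝ A) (hBconv : Convex ℝ B) {ξ : Ordinal}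
    (hAe : ∀ ε : ℝ, 0 < ε → derivIter (dder wdist ε) A ξ = ∅)
    (hBe : ∀ ε : ℝ, 0 < ε → derivIter (dder wdist ε) B ξ = ∅) :
    ∀ μ : ℝ, 0 < μ → derivIter (dder wdist μ) (A + B) ξ = ∅ := by
  classical
  have hAcl : IsClosed A := hAc.isClosed
  have hBcl : IsClosed B := hBc.isClosed
  have hSc : IsCompact (A + B) := hAc.add hBc
  have hAb : DBdd wdist A := dbdd_of_isCompact hAc
  have hBb : DBdd wdist B := dbdd_of_isCompact hBc
  have hSb : DBdd wdist (A + B) := dbdd_of_isCompact hSc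
  -- breakpoints
  set SK : Set Ordinal := {ζ | ∀ ε : ℝ, 0 < ε → derivIter (dder wdist ε) A ζ = ∅} with hSKdef
  set SL : Set Ordinal := {ζ | ∀ ε : ℝ, 0 < ε → derivIter (dder wdist ε) B ζ = ∅} with hSLdef
  have hSKne : SK.Nonempty := ⟨ξ, hAe⟩
  have hSLne : SL.Nonempty := ⟨ξ, hBe⟩
  have hαKmem : ∀ ε : ℝ, 0 < ε → derivIter (dder wdist ε) A (sInf SK) = ∅ := csInf_mem hSKne
  have hαLmem : ∀ ε : ℝ, 0 < ε → derivIter (dder wdist ε) B (sInf SL) = ∅ := csInf_mem hSLne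
  have hαKle : sInf SK ≤ ξ := csInf_le' hAe
  have hαLle : sInf SL ≤ ξ := csInf_le' hBe
  have hαKne0 : sInf SK ≠ 0 := by
    intro h0
    have h1 := hαKmem 1 one_pos
    rw [h0, derivIter_zero] at h1
    exact hAne.ne_empty h1
  have hαLne0 : sInf SL ≠ 0 := by
    intro h0
    have h1 := hαLmem 1 one_pos
    rw [h0, derivIter_zero] at h1
    exact hBne.ne_empty h1
  -- witnesses below the breakpoint
  have hwK : ∀ γ, γ < sInf SK → ∃ ε : ℝ, 0 < ε ∧
      (derivIter (dder wdist ε) A γ).Nonempty := by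
    intro γ hγ
    by_contra hcon
    push_neg at hcon
    have hmem : γ ∈ SK := hcon
    exact absurd (csInf_le' hmem) (not_le.2 hγ)
  have hwL : ∀ γ, γ < sInf SL → ∃ ε : ℝ, 0 < ε ∧
      (derivIter (dder wdist ε) B γ).Nonempty := by
    intro γ hγ
    by_contra hcon
    push_neg at hcon
    have hmem : γ ∈ SL := hcon
    exact absurd (csInf_le' hmem) (not_le.2 hγ)
  -- principality via the convexity midpoint lemma
  have hprinK : Ordinal.Principal (· + ·) (sInf SK) := by
    intro γ₁ γ₂ hγ₁ hγ₂
    obtain ⟨ε₁, hε₁, hne₁⟩ := hwK γ₁ hγ₁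
    obtain ⟨ε₂, hε₂, hne₂⟩ := hwK γ₂ hγ₂
    have hε : (0:ℝ) < min ε₁ ε₂ := lt_min hε₁ hε₂
    obtain ⟨x, hx⟩ := hne₁.mono (derivIter_dder_anti_eps (min_le_left ε₁ ε₂) hAb γ₁)
    obtain ⟨t, ht⟩ := hne₂.mono (derivIter_dder_anti_eps (min_le_right ε₁ ε₂) hAb γ₂)
    have hmid := derivIter_midpoint hAconv hAb hε.le γ₂ γ₁ x hx t ht
    by_contra hge
    push_neg at hge
    have hmem : γ₁ + γ₂ ∈ SK := by
      intro ε' hε'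
      have hsub : derivIter (dder wdist ε') A (γ₁ + γ₂) ⊆ ∅ := by
        rw [← hαKmem ε' hε']
        exact derivIter_anti (dder_subset wdist ε') _ _ _ hge
      exact Set.subset_empty_iff.1 hsub
    have h2 := hmem (2⁻¹ * min ε₁ ε₂) (by positivity)
    rw [h2] at hmid
    exact hmid
  have hprinL : Ordinal.Principal (· + ·) (sInf SL) := by
    intro γ₁ γ₂ hγ₁ hγ₂
    obtain ⟨ε₁, hε₁, hne₁⟩ := hwL γ₁ hγ₁
    obtain ⟨ε₂, hε₂, hne₂⟩ := hwL γ₂ hγ₂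
    have hε : (0:ℝ) < min ε₁ ε₂ := lt_min hε₁ hε₂
    obtain ⟨x, hx⟩ := hne₁.mono (derivIter_dder_anti_eps (min_le_left ε₁ ε₂) hBb γ₁)
    obtain ⟨t, ht⟩ := hne₂.mono (derivIter_dder_anti_eps (min_le_right ε₁ ε₂) hBb γ₂)
    have hmid := derivIter_midpoint hBconv hBb hε.le γ₂ γ₁ x hx t ht
    by_contra hge
    push_neg at hge
    have hmem : γ₁ + γ₂ ∈ SL := by
      intro ε' hε'
      have hsub : derivIter (dder wdist ε') B (γ₁ + γ₂) ⊆ ∅ := by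
        rw [← hαLmem ε' hε']
        exact derivIter_anti (dder_subset wdist ε') _ _ _ hge
      exact Set.subset_empty_iff.1 hsub
    have h2 := hmem (2⁻¹ * min ε₁ ε₂) (by positivity)
    rw [h2] at hmid
    exact hmid
  -- main emptiness at the maximum of the breakpoints
  have hmain : ∀ μ : ℝ, 0 < μ →
      derivIter (dder wdist μ) (A + B) (max (sInf SK) (sInf SL)) = ∅ := by
    intro μ hμ
    have hν : (0:ℝ) < μ / 4 := by positivity
    have hσc : Continuous (fun p : (WeakDual ℝ X) × (WeakDual ℝ X) => p.1 + p.2) :=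
      continuous_fst.add continuous_snd
    have hprodc : IsCompact (A ×ˢ B) := hAc.prod hBc
    have hprodcl : IsClosed (A ×ˢ B) := hprodc.isClosed
    have himage : (fun p : (WeakDual ℝ X) × (WeakDual ℝ X) => p.1 + p.2) '' (A ×ˢ B) = A + B :=
      Set.add_image_prod
    have hd₂b : DBdd (fun p q : (WeakDual ℝ X) × (WeakDual ℝ X) =>
        max (wdist p.1 q.1) (wdist p.2 q.2)) (A ×ˢ B) := by
      obtain ⟨M1, hM1⟩ := hAb
      obtain ⟨M2, hM2⟩ := hBb
      exact ⟨max M1 M2, fun p hp q hq => max_le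
        (le_max_of_le_left (hM1 _ hp.1 _ hq.1)) (le_max_of_le_right (hM2 _ hp.2 _ hq.2))⟩
    have hε'eq : 2 * (2 * (μ / 4)) ≤ μ := by linarith
    have himg := derivIter_image_lip hσc (by norm_num : (0:ℝ) ≤ 2) hν.le hε'eq
      hprodc hprodcl hd₂b (by rw [himage]; exact hSb)
      (fun p q => wdist_add_le p q) wdist_triangle wdist_comm
    have h1le : 1 ≤ max (sInf SK) (sInf SL) :=
      le_max_of_le_left (Ordinal.one_le_iff_ne_zero.2 hαKne0)
    rcases eq_or_lt_of_le h1le with hα1 | hα1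
    · -- maximum equal to one
      have hαK1 : sInf SK = 1 :=
        le_antisymm (hα1 ▸ le_max_left _ _) (Ordinal.one_le_iff_ne_zero.2 hαKne0)
      have hαL1 : sInf SL = 1 :=
        le_antisymm (hα1 ▸ le_max_right _ _) (Ordinal.one_le_iff_ne_zero.2 hαLne0)
      have hK1 : dder wdist (μ / 4) A = ∅ := by
        have h2 := hαKmem (μ / 4) hν
        rwa [hαK1, ← Ordinal.succ_zero, derivIter_succ, derivIter_zero] at h2
      have hL1 : dder wdist (μ / 4) B = ∅ := by
        have h2 := hαLmem (μ / 4) hν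
        rwa [hαL1, ← Ordinal.succ_zero, derivIter_succ, derivIter_zero] at h2
      rw [← hα1, ← Ordinal.succ_zero, derivIter_succ, derivIter_zero]
      have hstep := dder_image_lip (C' := A ×ˢ B) hσc (by norm_num : (0:ℝ) ≤ 2) hν.le hε'eq
        hprodc hd₂b (fun p q => wdist_add_le p q) wdist_triangle wdist_comm
      have hprodempty : dder (fun p q : (WeakDual ℝ X) × (WeakDual ℝ X) =>
          max (wdist p.1 q.1) (wdist p.2 q.2)) (μ / 4) (A ×ˢ B) = ∅ := by
        have h3 := dder_prod hν.le hAb hBb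
        rw [hK1, hL1] at h3
        simpa using Set.subset_empty_iff.1 (by simpa using h3)
      rw [Set.eq_empty_iff_forall_notMem]
      intro x hx
      rw [← himage] at hx
      have h4 := hstep hx
      rw [hprodempty] at h4
      simpa using h4
    · -- maximum is a principal limit ordinal
      have hprin : Ordinal.Principal (· + ·) (max (sInf SK) (sInf SL)) := by
        rcases max_choice (sInf SK) (sInf SL) with hmax | hmax <;> rw [hmax]
        · exact hprinK
        · exact hprinL
      have hlim : Order.IsSuccLimit (max (sInf SK) (sInf SL)) :=
        principal_add_isLimit_of_one_lt hprin hα1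
      set TK : Set Ordinal := {ζ | derivIter (dder wdist (μ / 4)) A ζ = ∅} with hTKdef
      set TL : Set Ordinal := {ζ | derivIter (dder wdist (μ / 4)) B ζ = ∅} with hTLdef
      have hTKne : TK.Nonempty := ⟨sInf SK, hαKmem (μ / 4) hν⟩
      have hTLne : TL.Nonempty := ⟨sInf SL, hαLmem (μ / 4) hν⟩
      have ha₀mem : derivIter (dder wdist (μ / 4)) A (sInf TK) = ∅ := csInf_mem hTKne
      have hb₀mem : derivIter (dder wdist (μ / 4)) B (sInf TL) = ∅ := csInf_mem hTLne
      have ha₀lt : sInf TK < max (sInf SK) (sInf SL) := by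
        have hle : sInf TK ≤ sInf SK := csInf_le' (hαKmem (μ / 4) hν)
        rcases lt_or_eq_of_le (hle.trans (le_max_left _ _)) with h | h
        · exact h
        · exfalso
          have hminT : ∀ ζ < sInf TK, (derivIter (dder wdist (μ / 4)) A ζ).Nonempty := by
            intro ζ hζ
            by_contra hc
            have hmem : ζ ∈ TK := Set.not_nonempty_iff_eq_empty.1 hc
            exact absurd (csInf_le' hmem) (not_le.2 hζ)
          exact (derivIter_nonempty_limit hAc hAcl (h ▸ hlim) hminT).ne_empty ha₀mem
      have hb₀lt : sInf TL < max (sInf SK) (sInf SL) := by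
        have hle : sInf TL ≤ sInf SL := csInf_le' (hαLmem (μ / 4) hν)
        rcases lt_or_eq_of_le (hle.trans (le_max_right _ _)) with h | h
        · exact h
        · exfalso
          have hminT : ∀ ζ < sInf TL, (derivIter (dder wdist (μ / 4)) B ζ).Nonempty := by
            intro ζ hζ
            by_contra hc
            have hmem : ζ ∈ TL := Set.not_nonempty_iff_eq_empty.1 hc
            exact absurd (csInf_le' hmem) (not_le.2 hζ)
          exact (derivIter_nonempty_limit hBc hBcl (h ▸ hlim) hminT).ne_empty hb₀mem
      have hnadd := nadd_lt_of_principal hprin hlim.pos.ne' ha₀lt hb₀lt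
      have hgrid := derivIter_prod_nadd hν.le hAb hBb hAcl hBcl ha₀mem hb₀mem
      have hempty₂ : derivIter (dder (fun p q : (WeakDual ℝ X) × (WeakDual ℝ X) =>
          max (wdist p.1 q.1) (wdist p.2 q.2)) (μ / 4)) (A ×ˢ B)
          (max (sInf SK) (sInf SL)) = ∅ := by
        have hsub := derivIter_anti (dder_subset (fun p q : (WeakDual ℝ X) × (WeakDual ℝ X) =>
            max (wdist p.1 q.1) (wdist p.2 q.2)) (μ / 4)) (A ×ˢ B)
          (max (sInf SK) (sInf SL)) _ hnadd.le
        rw [hgrid] at hsub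
        exact Set.subset_empty_iff.1 hsub
      rw [Set.eq_empty_iff_forall_notMem]
      intro x hx
      rw [← himage] at hx
      have h4 := himg (max (sInf SK) (sInf SL)) hx
      rw [hempty₂] at h4
      simpa using h4
  -- conclude at ξ
  intro μ hμ
  have hsub := derivIter_anti (dder_subset wdist μ) (A + B) ξ
    (max (sInf SK) (sInf SL)) (max_le hαKle hαLle)
  rw [hmain μ hμ] at hsub
  exact Set.subset_empty_iff.1 hsub

end Main

/-- `Sz(K + L) = max (Sz K) (Sz L)` for convex `w*`-compact sets. -/
theorem szlenk_minkowski_convex {X : Type*} [NormedAddCommGroup X] [NormedSpace ℝ X]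
    [CompleteSpace X] (K L : Set (StrongDual ℝ X)) (hK : K.Nonempty) (hL : L.Nonempty)
    (hKc : IsCompact ((fun f => StrongDual.toWeakDual f) '' K))
    (hLc : IsCompact ((fun f => StrongDual.toWeakDual f) '' L))
    (hKconv : Convex ℝ K) (hLconv : Convex ℝ L) :
    ∀ ξ : Ordinal,
      (∃ ε : ℝ, 0 < ε ∧ (derivIter (szSlice ε) (K + L) ξ).Nonempty) ↔
        ((∃ ε : ℝ, 0 < ε ∧ (derivIter (szSlice ε) K ξ).Nonempty) ∨
          (∃ ε : ℝ, 0 < ε ∧ (derivIter (szSlice ε) L ξ).Nonempty)) := by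
  classical
  intro ξ
  have hKWne : ((fun f => StrongDual.toWeakDual f) '' K).Nonempty := hK.image _
  have hLWne : ((fun f => StrongDual.toWeakDual f) '' L).Nonempty := hL.image _
  have hKWconv : Convex ℝ ((fun f => StrongDual.toWeakDual f) '' K) := by
    rintro _ ⟨a, ha, rfl⟩ _ ⟨b, hb, rfl⟩ s t hs ht hst
    exact ⟨s • a + t • b, hKconv ha hb hs ht hst, by simp [map_add, map_smul]⟩
  have hLWconv : Convex ℝ ((fun f => StrongDual.toWeakDual f) '' L) := by
    rintro _ ⟨a, ha, rfl⟩ _ ⟨b, hb, rfl⟩ s t hs ht hst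
    exact ⟨s • a + t • b, hLconv ha hb hs ht hst, by simp [map_add, map_smul]⟩
  have hSWb : DBdd wdist (((fun f => StrongDual.toWeakDual f) '' K) +
      ((fun f => StrongDual.toWeakDual f) '' L)) := dbdd_of_isCompact (hKc.add hLc)
  constructor
  · -- hard direction
    rintro ⟨μ0, hμ0, hne0⟩
    by_contra hRHS
    push_neg at hRHS
    obtain ⟨hRK, hRL⟩ := hRHS
    have hKe : ∀ ε : ℝ, 0 < ε →
        derivIter (dder wdist ε) ((fun f => StrongDual.toWeakDual f) '' K) ξ = ∅ := by
      intro ε hε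
      have h := hRK ε hε
      rw [← Set.not_nonempty_iff_eq_empty] at h ⊢
      rw [← bridge_nonempty]
      exact h
    have hLe : ∀ ε : ℝ, 0 < ε →
        derivIter (dder wdist ε) ((fun f => StrongDual.toWeakDual f) '' L) ξ = ∅ := by
      intro ε hε
      have h := hRL ε hε
      rw [← Set.not_nonempty_iff_eq_empty] at h ⊢
      rw [← bridge_nonempty]
      exact h
    have hmain := sum_derivIter_empty hKc hLc hKWne hLWne hKWconv hLWconv hKe hLe μ0 hμ0
    rw [bridge_nonempty, image_add_set] at hne0
    obtain ⟨x, hx⟩ := hne0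
    rw [hmain] at hx
    exact hx
  · -- easy direction
    rintro (⟨ε, hε, hne⟩ | ⟨ε, hε, hne⟩)
    · rw [bridge_nonempty] at hne
      obtain ⟨z, hz⟩ := hne
      obtain ⟨l₀, hl₀⟩ := hL
      refine ⟨ε, hε, ?_⟩
      rw [bridge_nonempty, image_add_set]
      have himgsub : (fun w : WeakDual ℝ X => w + StrongDual.toWeakDual l₀) ''
          ((fun f => StrongDual.toWeakDual f) '' K) ⊆
          ((fun f => StrongDual.toWeakDual f) '' K) +
            ((fun f => StrongDual.toWeakDual f) '' L) := by
        rintro _ ⟨k, hk, rfl⟩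
        exact Set.add_mem_add hk ⟨l₀, hl₀, rfl⟩
      have h1 := derivIter_image (d := wdist) (d' := wdist)
        (continuous_add_right _) one_pos hε.le
        (hSWb.mono himgsub)
        (fun p q => by rw [one_mul, wdist_add_right]) ξ
      have h2 := derivIter_dder_mono (ε := 1 * ε) himgsub hSWb ξ
      refine ⟨z + StrongDual.toWeakDual l₀, ?_⟩
      have h4 := h2 (h1 ⟨z, hz, rfl⟩)
      rwa [one_mul] at h4
    · rw [bridge_nonempty] at hne
      obtain ⟨z, hz⟩ := hne
      obtain ⟨k₀, hk₀⟩ := hK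
      refine ⟨ε, hε, ?_⟩
      rw [bridge_nonempty, image_add_set]
      have himgsub : (fun w : WeakDual ℝ X => w + StrongDual.toWeakDual k₀) ''
          ((fun f => StrongDual.toWeakDual f) '' L) ⊆
          ((fun f => StrongDual.toWeakDual f) '' K) +
            ((fun f => StrongDual.toWeakDual f) '' L) := by
        rintro _ ⟨l, hl, rfl⟩
        have hmem2 : StrongDual.toWeakDual k₀ + l ∈
            ((fun f => StrongDual.toWeakDual f) '' K) +
              ((fun f => StrongDual.toWeakDual f) '' L) :=
          Set.add_mem_add ⟨k₀, hk₀, rfl⟩ hl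
        rw [add_comm (StrongDual.toWeakDual k₀) l] at hmem2
        exact hmem2
      have h1 := derivIter_image (d := wdist) (d' := wdist)
        (continuous_add_right _) one_pos hε.le
        (hSWb.mono himgsub)
        (fun p q => by rw [one_mul, wdist_add_right]) ξ
      have h2 := derivIter_dder_mono (ε := 1 * ε) himgsub hSWb ξ
      refine ⟨z + StrongDual.toWeakDual k₀, ?_⟩
      have h4 := h2 (h1 ⟨z, hz, rfl⟩)
      rwa [one_mul] at h4
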